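/- If $\bar v^0 = 0$ and $\bar v^{n+1} = \bar v^n + \frac{1}{n+1}(c - (1-\gamma)\bar v^n)$ with $c > 0$ and $\frac{-1+\sqrt 5}{2} < \gamma < 1$, then for all $n \ge 1$, $\bar v^n \le \frac{c}{1-\gamma}\left[1 - b\, n^{-(1-\gamma)} - \frac{1-\gamma}{\gamma}\frac{1}{n}\right]$, where $b = \frac{\gamma^2 + \gamma - 1}{\gamma}$. -/

import Mathlib

open Real

/-- Bernoulli consequence: bounds on `(x/(x+1))^α`. -/
lemma aux_bern (x α : ℝ) (hx : 1 ≤ x) (hα0 : 0 ≤ α) (hα1 : α ≤ 1) :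
    (x / (x + α)) ≤ (x / (x + 1)) ^ α ∧ (x / (x + 1)) ^ α ≤ (x + 1 - α) / (x + 1) := by
  have hx0 : (0:ℝ) < x := by linarith
  have hx1 : (0:ℝ) < x + 1 := by linarith
  have hxα : (0:ℝ) < x + α := by linarith
  set t : ℝ := (x / (x + 1)) ^ α with ht
  set u : ℝ := ((x + 1) / x) ^ α with hu
  have htpos : 0 < t := Real.rpow_pos_of_pos (by positivity) α
  have hupos : 0 < u := Real.rpow_pos_of_pos (by positivity) α
  have htu : t * u = 1 := by
    rw [ht, hu, ← Real.mul_rpow (by positivity) (by positivity),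
      show x / (x + 1) * ((x + 1) / x) = 1 by field_simp, Real.one_rpow]
  have hB1 : t ≤ (x + 1 - α) / (x + 1) := by
    have hs : (-1:ℝ) ≤ -(1 / (x + 1)) := by
      rw [neg_le_neg_iff, div_le_one hx1]; linarith
    have h := rpow_one_add_le_one_add_mul_self hs hα0 hα1 (p := α)
    have e1 : (1:ℝ) + -(1 / (x + 1)) = x / (x + 1) := by field_simp; ring
    have e2 : (1:ℝ) + α * -(1 / (x + 1)) = (x + 1 - α) / (x + 1) := by field_simp; ring
    rw [e1, e2] at h
    exact h
  have hB2 : u ≤ (x + α) / x := by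
    have hs : (-1:ℝ) ≤ 1 / x := by
      have : (0:ℝ) ≤ 1 / x := by positivity
      linarith
    have h := rpow_one_add_le_one_add_mul_self hs hα0 hα1 (p := α)
    have e1 : (1:ℝ) + 1 / x = (x + 1) / x := by field_simp
    have e2 : (1:ℝ) + α * (1 / x) = (x + α) / x := by field_simp
    rw [e1, e2] at h
    exact h
  refine ⟨?_, hB1⟩
  rw [div_le_iff₀ hxα]
  have hux : u * x ≤ x + α := (le_div_iff₀ hx0).mp hB2
  have h1 : t * (u * x) ≤ t * (x + α) := mul_le_mul_of_nonneg_left hux htpos.le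
  have he : t * (u * x) = x := by
    rw [show t * (u * x) = t * u * x by ring, htu, one_mul]
  linarith

/-- key A : `(x+1+α)(x+1)^(-α) ≤ (x+1) x^(-α)` -/
lemma aux_keyA (x α : ℝ) (hx : 1 ≤ x) (hα0 : 0 ≤ α) (hα1 : α ≤ 1) :
    (x + 1 + α) * (x + 1) ^ (-α) ≤ (x + 1) * x ^ (-α) := by
  have hx0 : (0:ℝ) < x := by linarith
  have hx1 : (0:ℝ) < x + 1 := by linarith
  obtain ⟨-, hB1⟩ := aux_bern x α hx hα0 hα1
  have hpx : (0:ℝ) < x ^ α := Real.rpow_pos_of_pos hx0 α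
  have hpx1 : (0:ℝ) < (x + 1) ^ α := Real.rpow_pos_of_pos hx1 α
  have ht : (x / (x + 1)) ^ α = x ^ α / (x + 1) ^ α :=
    Real.div_rpow hx0.le (by linarith) α
  rw [ht, div_le_div_iff₀ hpx1 hx1] at hB1
  -- hB1 : x ^ α * (x + 1) ≤ (x + 1 - α) * (x + 1) ^ α
  rw [Real.rpow_neg hx1.le, Real.rpow_neg hx0.le, ← div_eq_mul_inv, ← div_eq_mul_inv,
    div_le_div_iff₀ hpx1 hpx]
  -- goal : (x + 1 + α) * x ^ α ≤ (x + 1) * (x + 1) ^ α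
  nlinarith [mul_le_mul_of_nonneg_left hB1 (show (0:ℝ) ≤ x + 1 + α by linarith),
    mul_nonneg hpx1.le (sq_nonneg α)]

/-- key B : `x·x^(-α) ≤ x·(x+1)^(-α) + α·x^(-α)` -/
lemma aux_keyB (x α : ℝ) (hx : 1 ≤ x) (hα0 : 0 ≤ α) (hα1 : α ≤ 1) :
    x * x ^ (-α) ≤ x * (x + 1) ^ (-α) + α * x ^ (-α) := by
  have hx0 : (0:ℝ) < x := by linarith
  have hx1 : (0:ℝ) < x + 1 := by linarith
  have hxα : (0:ℝ) < x + α := by linarith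
  obtain ⟨hB2, -⟩ := aux_bern x α hx hα0 hα1
  have hpx : (0:ℝ) < x ^ α := Real.rpow_pos_of_pos hx0 α
  have hpx1 : (0:ℝ) < (x + 1) ^ α := Real.rpow_pos_of_pos hx1 α
  have ht : (x / (x + 1)) ^ α = x ^ α / (x + 1) ^ α :=
    Real.div_rpow hx0.le (by linarith) α
  rw [ht, div_le_div_iff₀ hxα hpx1] at hB2
  -- hB2 : x * (x + 1) ^ α ≤ x ^ α * (x + α)
  have hmono : x ^ α ≤ (x + 1) ^ α := Real.rpow_le_rpow hx0.le (by linarith) hα0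
  have goal' : x * (x + 1) ^ α ≤ x * x ^ α + α * (x + 1) ^ α := by
    nlinarith [mul_le_mul_of_nonneg_left hmono hα0]
  have hdiv : x / x ^ α ≤ x / (x + 1) ^ α + α / x ^ α := by
    rw [div_add_div _ _ hpx1.ne' hpx.ne', div_le_div_iff₀ hpx (mul_pos hpx1 hpx)]
    nlinarith [mul_le_mul_of_nonneg_right goal' hpx.le]
  calc x * x ^ (-α) = x / x ^ α := by rw [Real.rpow_neg hx0.le, div_eq_mul_inv]
    _ ≤ x / (x + 1) ^ α + α / x ^ α := hdiv
    _ = x * (x + 1) ^ (-α) + α * x ^ (-α) := by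
        rw [Real.rpow_neg hx0.le, Real.rpow_neg hx1.le, div_eq_mul_inv, div_eq_mul_inv]

set_option maxHeartbeats 1600000 in
theorem stmt_4 (c γ : ℝ) (hc : 0 < c) (hγ0 : (-1 + Real.sqrt 5) / 2 < γ) (hγ1 : γ < 1)
    (v : ℕ → ℝ) (h0 : v 0 = 0)
    (hrec : ∀ n : ℕ, v (n + 1) = v n + (1 / (n + 1 : ℝ)) * (c - (1 - γ) * v n)) :
    ∀ n : ℕ, 1 ≤ n →
      v n ≤ c / (1 - γ) *
        (1 - (γ ^ 2 + γ - 1) / γ * (n : ℝ) ^ (-(1 - γ)) - (1 - γ) / γ * (1 / (n : ℝ))) := by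
  have h5 : Real.sqrt 5 ^ 2 = 5 := Real.sq_sqrt (by norm_num)
  have h5nn : 0 ≤ Real.sqrt 5 := Real.sqrt_nonneg 5
  have h5gt : (1:ℝ) < Real.sqrt 5 := by nlinarith
  have hγpos : 0 < γ := by nlinarith
  have hγne : γ ≠ 0 := hγpos.ne'
  have hbnum : 0 < γ ^ 2 + γ - 1 := by nlinarith
  set b : ℝ := (γ ^ 2 + γ - 1) / γ with hbdef
  have hbpos : 0 < b := div_pos hbnum hγpos
  have hblt : b < 1 := by
    rw [hbdef, div_lt_one hγpos]; nlinarith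
  set α : ℝ := 1 - γ with hαdef
  have hαpos : 0 < α := by rw [hαdef]; linarith
  have hαne : α ≠ 0 := hαpos.ne'
  have hα1 : α < 1 := by rw [hαdef]; linarith
  have hαnn : (0:ℝ) ≤ α := hαpos.le
  clear_value b α
  intro n hn
  induction n, hn using Nat.le_induction with
  | base =>
    have hv1 : v 1 = c := by
      have h := hrec 0
      rw [h0] at h
      simpa using h
    rw [hv1]
    simp only [Nat.cast_one, Real.one_rpow, one_div, inv_one, mul_one]
    have hbr : 1 - b - α / γ = α := by
      rw [hbdef, hαdef]; field_simp; ring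
    rw [hbr, div_mul_cancel₀ _ hαne]
  | succ n hn ih =>
    have hm1 : (1:ℝ) ≤ (n:ℝ) := by exact_mod_cast hn
    push_cast
    set m : ℝ := (n:ℝ) with hmdef
    have hm0 : (0:ℝ) < m := by linarith
    have hN0 : (0:ℝ) < m + 1 := by linarith
    set P : ℝ := m ^ (-α) with hPdef
    set Q : ℝ := (m + 1) ^ (-α) with hQdef
    clear_value m P Q
    have hPpos : 0 < P := by rw [hPdef]; exact Real.rpow_pos_of_pos hm0 _
    have hQpos : 0 < Q := by rw [hQdef]; exact Real.rpow_pos_of_pos hN0 _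
    have hP1 : P ≤ 1 := by
      rw [hPdef]
      exact Real.rpow_le_one_of_one_le_of_nonpos hm1 (by linarith)
    have hA : (m + 1 + α) * Q ≤ (m + 1) * P := by
      rw [hPdef, hQdef]; exact aux_keyA m α hm1 hαnn hα1.le
    have hB : m * P ≤ m * Q + α * P := by
      rw [hPdef, hQdef]; exact aux_keyB m α hm1 hαnn hα1.le
    -- polynomial key inequality
    have hkey : b * ((Q - P) * (m * (m + 1)) + α * P * m) ≤ α := by
      have h1 : b * m * ((m + 1) * Q + α * Q) ≤ b * m * ((m + 1) * P) := by
        apply mul_le_mul_of_nonneg_left _ (by positivity)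
        nlinarith
      have h2 : b * α * (m * P) ≤ b * α * (m * Q + α * P) :=
        mul_le_mul_of_nonneg_left hB (by positivity)
      have h3 : b * α * α * P ≤ b * α * α :=
        mul_le_of_le_one_right (by positivity) hP1
      have hbα : b * α ≤ α := by
        nlinarith [mul_le_mul_of_nonneg_right hblt.le hαnn]
      have h4 : b * α * α ≤ α := by
        nlinarith [mul_le_mul_of_nonneg_right hbα hαnn,
          mul_le_mul_of_nonneg_right hα1.le hαnn]
      linarith [h1, h2, h3, h4]
    -- recursion
    have hvn1 : v (n + 1) = (1 - α / (m + 1)) * v n + c / (m + 1) := by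
      rw [hrec n, hmdef]
      push_cast
      have hne : ((n:ℝ) + 1) ≠ 0 := by positivity
      field_simp
      ring
    have hcoef : 0 ≤ 1 - α / (m + 1) := by
      have : α / (m + 1) ≤ 1 := by
        rw [div_le_one hN0]; linarith
      linarith
    have step1 : v (n + 1) ≤
        (1 - α / (m + 1)) * (c / α * (1 - b * P - α / γ * (1 / m))) + c / (m + 1) := by
      rw [hvn1]
      exact add_le_add (mul_le_mul_of_nonneg_left ih hcoef) le_rfl
    have hD : c / α * (1 - b * Q - α / γ * (1 / (m + 1)))
        - ((1 - α / (m + 1)) * (c / α * (1 - b * P - α / γ * (1 / m))) + c / (m + 1))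
        = c / α / (m * (m + 1)) * (α - b * ((Q - P) * (m * (m + 1)) + α * P * m)) := by
      rw [hαdef]
      have h1γ : (1:ℝ) - γ ≠ 0 := by rw [← hαdef]; exact hαne
      field_simp
      ring
    have hnn : 0 ≤ c / α / (m * (m + 1)) := by positivity
    have hfinal := mul_nonneg hnn (sub_nonneg.2 hkey)
    linarith [step1, hD, hfinal]
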